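/- The function r ↦ r/Φ(r) is nondecreasing on [R₁, ∞). -/

import Mathlib

open Filter Set

/-- The function `r ↦ r / Φ(r)` is nondecreasing on `[R₁, ∞)`. -/
theorem r_div_Phi_monotone
    (σ₀ : ℝ) (hσ₀ : 0 < σ₀)
    (κ : ℝ → ℝ) (hκc : ContinuousOn κ (Set.Ici 0))
    (hκ : ∃ c > 0, ∀ᶠ r in Filter.atTop, c ≤ κ r)
    (R₀ : ℝ) (hR₀ : R₀ = sInf {s : ℝ | 0 ≤ s ∧ ∀ r ≥ s, 0 ≤ κ r})
    (R₁ : ℝ) (hR₁ : R₁ = sInf {s : ℝ | R₀ ≤ s ∧ ∀ r ≥ s, 4 * σ₀ ^ 2 ≤ s * (s - R₀) * κ r})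
    (φ : ℝ → ℝ)
    (hφ : ∀ r, φ r = Real.exp (-(1 / (2 * σ₀ ^ 2)) * ∫ s in (0:ℝ)..r, s * max 0 (-κ s)))
    (Φ : ℝ → ℝ) (hΦ : ∀ r, Φ r = ∫ s in (0:ℝ)..r, φ s) :
    MonotoneOn (fun r => r / Φ r) (Set.Ici R₁) := by
  -- R₀ ≥ 0 and R₁ ≥ 0
  have hR₀0 : 0 ≤ R₀ := by
    rw [hR₀]; exact Real.sInf_nonneg (fun x hx => hx.1)
  have hR₁0 : 0 ≤ R₁ := by
    rw [hR₁]; exact Real.sInf_nonneg (fun x hx => hR₀0.trans hx.1)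
  -- the integrand of φ
  set g : ℝ → ℝ := fun s => s * max 0 (-κ s) with hg
  have huIcc : ∀ a b : ℝ, 0 ≤ a → 0 ≤ b → Set.uIcc a b ⊆ Set.Ici 0 := by
    intro a b ha hb x hx
    exact le_trans (le_inf ha hb) hx.1
  have hgc : ContinuousOn g (Set.Ici 0) :=
    continuousOn_id.mul (continuousOn_const.sup' hκc.neg)
  have hgnn : ∀ s ∈ Set.Ici (0:ℝ), 0 ≤ g s := fun s hs =>
    mul_nonneg hs (le_max_left _ _)
  have hgint : ∀ a b : ℝ, 0 ≤ a → 0 ≤ b → IntervalIntegrable g MeasureTheory.volume a b :=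
    fun a b ha hb => (hgc.mono (huIcc a b ha hb)).intervalIntegrable
  -- φ is positive
  have hφpos : ∀ r, 0 < φ r := fun r => (hφ r) ▸ Real.exp_pos _
  -- φ is antitone on Ici 0
  have hφanti : AntitoneOn φ (Set.Ici 0) := by
    intro a ha b hb hab
    rw [hφ a, hφ b]
    apply Real.exp_le_exp.mpr
    have hI : (∫ s in (0:ℝ)..a, g s) ≤ ∫ s in (0:ℝ)..b, g s := by
      have h1 := hgint 0 a le_rfl ha
      have h2 := hgint a b ha hb
      have := intervalIntegral.integral_add_adjacent_intervals h1 h2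
      have hnn : 0 ≤ ∫ s in a..b, g s :=
        intervalIntegral.integral_nonneg hab (fun u hu => hgnn u (le_trans ha hu.1))
      linarith
    have hc : 0 < 1 / (2 * σ₀ ^ 2) := by positivity
    nlinarith
  -- interval integrability of φ
  have hφint : ∀ a b : ℝ, 0 ≤ a → 0 ≤ b → IntervalIntegrable φ MeasureTheory.volume a b := by
    intro a b ha hb
    exact (hφanti.mono (huIcc a b ha hb)).intervalIntegrable
  -- Φ is positive on (0, ∞)
  have hΦpos : ∀ r : ℝ, 0 < r → 0 < Φ r := by
    intro r hr
    rw [hΦ r]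
    exact intervalIntegral.intervalIntegral_pos_of_pos_on (hφint 0 r le_rfl hr.le)
      (fun x _ => hφpos x) hr
  -- a·φ(a) ≤ Φ(a) for a ≥ 0
  have hlow : ∀ a : ℝ, 0 ≤ a → a * φ a ≤ Φ a := by
    intro a ha
    rw [hΦ a]
    calc a * φ a = ∫ _ in (0:ℝ)..a, φ a := by
          rw [intervalIntegral.integral_const, smul_eq_mul, sub_zero]
      _ ≤ ∫ s in (0:ℝ)..a, φ s := by
          apply intervalIntegral.integral_mono_on ha intervalIntegrable_const
            (hφint 0 a le_rfl ha)
          intro x hx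
          exact hφanti hx.1 (le_trans hx.1 hx.2) hx.2
  -- ∫ₐᵇ φ ≤ (b-a)·φ(a) for 0 ≤ a ≤ b
  have hup : ∀ a b : ℝ, 0 ≤ a → a ≤ b → (∫ s in a..b, φ s) ≤ (b - a) * φ a := by
    intro a b ha hab
    calc (∫ s in a..b, φ s) ≤ ∫ _ in a..b, φ a := by
          apply intervalIntegral.integral_mono_on hab (hφint a b ha (ha.trans hab))
            intervalIntegrable_const
          intro x hx
          exact hφanti ha (ha.trans hx.1) hx.1
      _ = (b - a) * φ a := by rw [intervalIntegral.integral_const, smul_eq_mul]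
  -- monotone on Ici 0
  have main : MonotoneOn (fun r => r / Φ r) (Set.Ici 0) := by
    intro a ha b hb hab
    rcases eq_or_lt_of_le (Set.mem_Ici.mp ha : (0:ℝ) ≤ a) with h0 | h0
    · simp only [← h0, zero_div]
      rcases eq_or_lt_of_le (Set.mem_Ici.mp hb : (0:ℝ) ≤ b) with h0' | h0'
      · simp [← h0']
      · exact div_nonneg hb (hΦpos b h0').le
    · have hb' : 0 < b := lt_of_lt_of_le h0 hab
      have hΦa := hΦpos a h0
      have hΦb := hΦpos b hb'
      simp only
      rw [div_le_div_iff₀ hΦa hΦb]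
      have hsplit : Φ b = Φ a + ∫ s in a..b, φ s := by
        rw [hΦ a, hΦ b, ← intervalIntegral.integral_add_adjacent_intervals
          (hφint 0 a le_rfl ha) (hφint a b ha hb)]
      have h1 := hlow a ha
      have h2 := hup a b ha hab
      nlinarith [hφpos a]
  exact main.mono (Set.Ici_subset_Ici.mpr hR₁0)
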